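/- Let n, t, k₊ be integers with 2 ≤ t, 4t < n, and k₊ ≥ 2·C(n,t) − 2. Then there is no lattice Λ ⊆ ℤⁿ (additive subgroup of ℤⁿ) such that the error-ball B(n,t,k₊,0) tiles ℤⁿ by Λ. -/

import Mathlib

open Finset

/-- Hamming weight of an integer vector: the number of nonzero entries. -/
def wt {n : ℕ} (x : Fin n → ℤ) : ℕ := (Finset.univ.filter (fun i => x i ≠ 0)).card

/-- The `(n,t,k₊,k₋)`-error-ball in `ℤⁿ`. -/
def errBall (n t : ℕ) (kp km : ℤ) : Set (Fin n → ℤ) :=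
  {x | (∀ i, -km ≤ x i ∧ x i ≤ kp) ∧ wt x ≤ t}

/-- `Tiles B T` : every `z ∈ ℤⁿ` is uniquely `z = v + b` with `v ∈ T` and `b ∈ B`. -/
def Tiles {n : ℕ} (B T : Set (Fin n → ℤ)) : Prop :=
  ∀ z : Fin n → ℤ, ∃! p : (Fin n → ℤ) × (Fin n → ℤ),
    p.1 ∈ T ∧ p.2 ∈ B ∧ z = p.1 + p.2

namespace Stmt11

variable {n t : ℕ} {kp : ℤ} {Λ : AddSubgroup (Fin n → ℤ)}

lemma mem_ball_iff {x : Fin n → ℤ} :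
    x ∈ errBall n t kp 0 ↔ (∀ i, 0 ≤ x i ∧ x i ≤ kp) ∧ wt x ≤ t := by
  simp [errBall]

lemma wt_max_pos (d : Fin n → ℤ) :
    wt (fun i => max (d i) 0) = (univ.filter fun i => 1 ≤ d i).card := by
  unfold wt
  congr 1
  apply filter_congr
  intro i _
  rcases le_or_gt (d i) 0 with h | h
  · simp only [max_eq_right h]
    constructor
    · intro hc; exact absurd rfl hc
    · intro hc; omega
  · simp only [max_eq_left h.le]
    constructor
    · intro _; omega
    · intro _; omega

lemma max_mem_ball (hkp0 : 0 ≤ kp) (d : Fin n → ℤ) (hub : ∀ i, d i ≤ kp)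
    (hwt : (univ.filter fun i => 1 ≤ d i).card ≤ t) :
    (fun i => max (d i) 0) ∈ errBall n t kp 0 := by
  rw [mem_ball_iff]
  refine ⟨fun i => ⟨le_max_right _ _, max_le (hub i) hkp0⟩, ?_⟩
  rw [wt_max_pos]; exact hwt

/-- Packing: a lattice vector whose positive and negative parts both lie in the ball is zero. -/
lemma pack (hT : Tiles (errBall n t kp 0) (Λ : Set (Fin n → ℤ)))
    (d : Fin n → ℤ) (hd : d ∈ Λ)
    (hp : (fun i => max (d i) 0) ∈ errBall n t kp 0)
    (hm : (fun i => max (-(d i)) 0) ∈ errBall n t kp 0) : d = 0 := by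
  obtain ⟨p₀, hp₀, hup⟩ := hT (fun i => max (d i) 0)
  have key : (fun i => max (d i) 0) = d + fun i => max (-(d i)) 0 := by
    funext i
    simp only [Pi.add_apply]
    rcases le_total (d i) 0 with h | h
    · rw [max_eq_right h, max_eq_left (by omega)]; ring
    · rw [max_eq_left h, max_eq_right (by omega)]; ring
  have e1 := hup ((0 : Fin n → ℤ), fun i => max (d i) 0)
    ⟨Λ.zero_mem, hp, (zero_add _).symm⟩
  have e2 := hup (d, fun i => max (-(d i)) 0) ⟨hd, hm, key⟩
  have := e2.trans e1.symm
  exact congrArg Prod.fst this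

/-- Sign structure: a nonzero small lattice vector supported on a `(t+1)`-set is
strictly positive or strictly negative on all of it. -/
lemma struct (hT : Tiles (errBall n t kp 0) (Λ : Set (Fin n → ℤ))) (hkp0 : 0 ≤ kp)
    {V : Finset (Fin n)} (hV : V.card = t + 1)
    {d : Fin n → ℤ} (hd : d ∈ Λ) (hd0 : d ≠ 0)
    (hoff : ∀ i, i ∉ V → d i = 0) (hbd : ∀ i, -kp ≤ d i ∧ d i ≤ kp) :
    (∀ i ∈ V, 1 ≤ d i) ∨ (∀ i ∈ V, d i ≤ -1) := by
  by_cases hP : (univ.filter fun i => 1 ≤ d i).card ≤ t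
  · by_cases hQ : (univ.filter fun i => 1 ≤ -(d i)).card ≤ t
    · exfalso
      apply hd0
      apply pack hT d hd
      · exact max_mem_ball hkp0 d (fun i => (hbd i).2) hP
      · have hball := max_mem_ball (n := n) (t := t) hkp0 (fun i => -(d i))
          (fun i => by show -(d i) ≤ kp; have := (hbd i).1; omega)
          (by simpa using hQ)
        simpa using hball
    · right
      push_neg at hQ
      have hsub : (univ.filter fun i => 1 ≤ -(d i)) ⊆ V := by
        intro i hi
        simp only [mem_filter, mem_univ, true_and] at hi
        by_contra h
        have := hoff i h
        omega
      have hVsub := Finset.eq_of_subset_of_card_le hsub (by omega)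
      intro i hiV
      have : i ∈ univ.filter fun i => 1 ≤ -(d i) := hVsub ▸ hiV
      simp only [mem_filter, mem_univ, true_and] at this
      omega
  · left
    push_neg at hP
    have hsub : (univ.filter fun i => 1 ≤ d i) ⊆ V := by
      intro i hi
      simp only [mem_filter, mem_univ, true_and] at hi
      by_contra h
      have := hoff i h
      omega
    have hVsub := Finset.eq_of_subset_of_card_le hsub (by omega)
    intro i hiV
    have : i ∈ univ.filter fun i => 1 ≤ d i := hVsub ▸ hiV
    simp only [mem_filter, mem_univ, true_and] at this
    exact this


/-- The finite model of the ball. -/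
noncomputable def BF (n t : ℕ) (kp : ℤ) : Finset (Fin n → ℤ) :=
  (Fintype.piFinset fun _ : Fin n => Icc (0:ℤ) kp).filter (fun x => wt x ≤ t)

lemma mem_BF {x : Fin n → ℤ} (hx : x ∈ errBall n t kp 0) : x ∈ BF n t kp := by
  rw [mem_ball_iff] at hx
  refine mem_filter.mpr ⟨?_, hx.2⟩
  rw [Fintype.mem_piFinset]
  intro i
  exact mem_Icc.mpr (hx.1 i)

lemma prod_if_mem (V : Finset (Fin n)) (a : ℕ) :
    (∏ i : Fin n, (if i ∈ V then a else 1)) = a ^ V.card := by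
  rw [Finset.prod_ite_mem, univ_inter, prod_const]

/-- Cardinality bound: `|B| < C(n,t) * (kp+1)^t`. -/
lemma BF_card_lt (ht1 : 1 ≤ t) (htn : t < n) (hkp0 : 0 ≤ kp) :
    (BF n t kp).card < n.choose t * ((kp+1).toNat) ^ t := by
  classical
  set K' := (kp+1).toNat with hK'
  have hsel : ∀ x : Fin n → ℤ, ∃ T : Finset (Fin n), T.card = t ∧
      ((univ.filter fun i => x i ≠ 0).card ≤ t → (univ.filter fun i => x i ≠ 0) ⊆ T) := by
    intro x
    by_cases h : (univ.filter fun i => x i ≠ 0).card ≤ t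
    · obtain ⟨T, hsub, hcard⟩ := Finset.exists_superset_card_eq h
        (by simpa [Fintype.card_fin] using htn.le)
      exact ⟨T, hcard, fun _ => hsub⟩
    · obtain ⟨T, -, hcard⟩ := Finset.exists_subset_card_eq
        (s := (univ : Finset (Fin n))) (n := t)
        (by simpa [Fintype.card_fin] using htn.le)
      exact ⟨T, hcard, fun hc => absurd hc h⟩
  choose Tsel hTcard hTsub using hsel
  set S' : Finset ((_ : Finset (Fin n)) × (Fin n → ℤ)) :=
    (univ.powersetCard t).sigma
      (fun T => Fintype.piFinset fun i => if i ∈ T then Icc (0:ℤ) kp else ({0} : Finset ℤ))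
    with hS'
  have hfib : ∀ T : Finset (Fin n), T.card = t →
      (Fintype.piFinset fun i => if i ∈ T then Icc (0:ℤ) kp else ({0} : Finset ℤ)).card
        = K' ^ t := by
    intro T hTc
    rw [Fintype.card_piFinset]
    calc (∏ i : Fin n, ((if i ∈ T then Icc (0:ℤ) kp else ({0} : Finset ℤ))).card)
        = ∏ i : Fin n, (if i ∈ T then K' else 1) := by
          apply Finset.prod_congr rfl
          intro i _
          by_cases h : i ∈ T <;> simp [h, Int.card_Icc, hK']
      _ = K' ^ T.card := prod_if_mem T K'
      _ = K' ^ t := by rw [hTc]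
  have hS'card : S'.card = n.choose t * K' ^ t := by
    rw [hS', card_sigma]
    rw [Finset.sum_congr rfl (fun T hTm => hfib T (Finset.mem_powersetCard.mp hTm).2)]
    rw [sum_const, smul_eq_mul, card_powersetCard, card_univ, Fintype.card_fin]
  set F : (Fin n → ℤ) → (_ : Finset (Fin n)) × (Fin n → ℤ) := fun x => ⟨Tsel x, x⟩ with hF
  have hmaps : ∀ x ∈ BF n t kp, F x ∈ S' := by
    intro x hx
    rw [BF, mem_filter, Fintype.mem_piFinset] at hx
    refine Finset.mem_sigma.mpr ⟨Finset.mem_powersetCard.mpr ⟨subset_univ _, hTcard x⟩, ?_⟩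
    rw [Fintype.mem_piFinset]
    intro i
    by_cases h : i ∈ Tsel x
    · simpa [h, hF] using hx.1 i
    · simp only [hF, h, if_false, Finset.mem_singleton]
      by_contra hne
      exact h (hTsub x hx.2 (by simp [hne]))
  obtain ⟨j, hj⟩ : (Tsel 0).Nonempty := card_pos.mp (by rw [hTcard]; omega)
  obtain ⟨j', hj'⟩ : ∃ j', j' ∉ Tsel 0 := by
    by_contra h
    push_neg at h
    have hsub : (univ : Finset (Fin n)) ⊆ Tsel 0 := fun i _ => h i
    have := Finset.card_le_card hsub
    rw [hTcard, card_univ, Fintype.card_fin] at this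
    omega
  set T₁ : Finset (Fin n) := insert j' ((Tsel 0).erase j) with hT₁
  have hT₁card : T₁.card = t := by
    rw [hT₁, card_insert_of_notMem (fun h => hj' (erase_subset _ _ h)),
      card_erase_of_mem hj, hTcard]
    omega
  have hT₁ne : T₁ ≠ Tsel 0 := fun h => hj' (h ▸ mem_insert_self _ _)
  have h0S : (⟨T₁, (0 : Fin n → ℤ)⟩ : (_ : Finset (Fin n)) × (Fin n → ℤ)) ∈ S' := by
    refine Finset.mem_sigma.mpr ⟨Finset.mem_powersetCard.mpr ⟨subset_univ _, hT₁card⟩, ?_⟩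
    rw [Fintype.mem_piFinset]
    intro i
    by_cases h : i ∈ T₁ <;> simp [h, hkp0]
  have hmiss : ∀ x ∈ BF n t kp, F x ≠ ⟨T₁, (0 : Fin n → ℤ)⟩ := by
    intro x hx h
    have hx0 : x = 0 := congrArg Sigma.snd h
    have hfst : Tsel x = T₁ := congrArg Sigma.fst h
    rw [hx0] at hfst
    exact hT₁ne hfst.symm
  have hinj : Set.InjOn F ((BF n t kp) : Set (Fin n → ℤ)) := by
    intro x _ y _ hxy
    exact congrArg Sigma.snd hxy
  have h1 : (BF n t kp).card ≤ (S'.erase ⟨T₁, 0⟩).card :=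
    Finset.card_le_card_of_injOn F
      (fun x hx => Finset.mem_erase.mpr ⟨hmiss x hx, hmaps x hx⟩) hinj
  have h2 : (S'.erase ⟨T₁, 0⟩).card < S'.card :=
    Finset.card_erase_lt_of_mem h0S
  calc (BF n t kp).card < S'.card := lt_of_le_of_lt h1 h2
    _ = n.choose t * K' ^ t := hS'card


lemma card_boxV (V : Finset (Fin n)) (kp : ℤ) :
    (Fintype.piFinset fun i => if i ∈ V then Icc (0:ℤ) kp else ({0} : Finset ℤ)).card
      = ((kp+1).toNat) ^ V.card := by
  rw [Fintype.card_piFinset]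
  calc (∏ i : Fin n, ((if i ∈ V then Icc (0:ℤ) kp else ({0} : Finset ℤ))).card)
      = ∏ i : Fin n, (if i ∈ V then (kp+1).toNat else 1) := by
        apply Finset.prod_congr rfl
        intro i _
        by_cases h : i ∈ V <;> simp [h, Int.card_Icc]
    _ = ((kp+1).toNat) ^ V.card := prod_if_mem V _

/-- `P V w` : `w` is a lattice vector, positive on all of `V`, bounded by `kp`, zero off `V`. -/
def isL (Λ : AddSubgroup (Fin n → ℤ)) (kp : ℤ) (V : Finset (Fin n)) (w : Fin n → ℤ) : Prop :=
  w ∈ Λ ∧ (∀ i ∈ V, 1 ≤ w i ∧ w i ≤ kp) ∧ (∀ i, i ∉ V → w i = 0)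

lemma exists_isL (hT : Tiles (errBall n t kp 0) (Λ : Set (Fin n → ℤ)))
    (ht1 : 1 ≤ t) (htn : t < n) (hkp0 : 0 ≤ kp)
    (hKN : n.choose t ≤ (kp+1).toNat)
    (rep : (Fin n → ℤ) → (Fin n → ℤ)) (hrepB : ∀ z, rep z ∈ errBall n t kp 0)
    (hrepΛ : ∀ z, z - rep z ∈ Λ)
    {V : Finset (Fin n)} (hV : V.card = t + 1) :
    ∃ w : Fin n → ℤ, isL Λ kp V w := by
  classical
  set K' := (kp+1).toNat with hK'
  set box := Fintype.piFinset fun i => if i ∈ V then Icc (0:ℤ) kp else ({0} : Finset ℤ)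
    with hbox
  have hboxcard : box.card = K' ^ (t+1) := by rw [hbox, card_boxV, hV]
  have hlt : (BF n t kp).card < box.card := by
    calc (BF n t kp).card < n.choose t * K' ^ t := BF_card_lt ht1 htn hkp0
      _ ≤ K' * K' ^ t := Nat.mul_le_mul_right _ hKN
      _ = K' ^ (t+1) := by ring
      _ = box.card := hboxcard.symm
  obtain ⟨x, hx, y, hy, hxy, hfeq⟩ :=
    Finset.exists_ne_map_eq_of_card_lt_of_maps_to hlt (fun z _ => mem_BF (hrepB z))
  rw [hbox, Fintype.mem_piFinset] at hx hy
  have hxV : ∀ i ∈ V, 0 ≤ x i ∧ x i ≤ kp := by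
    intro i hi; have := hx i; rw [if_pos hi, mem_Icc] at this; exact this
  have hyV : ∀ i ∈ V, 0 ≤ y i ∧ y i ≤ kp := by
    intro i hi; have := hy i; rw [if_pos hi, mem_Icc] at this; exact this
  have hxO : ∀ i, i ∉ V → x i = 0 := by
    intro i hi; have := hx i; rwa [if_neg hi, mem_singleton] at this
  have hyO : ∀ i, i ∉ V → y i = 0 := by
    intro i hi; have := hy i; rwa [if_neg hi, mem_singleton] at this
  have hdΛ : x - y ∈ Λ := by
    have h1 := hrepΛ x
    have h2 := hrepΛ y
    have heq : (x - rep x) - (y - rep y) = x - y := by rw [hfeq]; ring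
    rw [← heq]
    exact sub_mem h1 h2
  have hd0 : x - y ≠ 0 := sub_ne_zero.mpr hxy
  have hoff : ∀ i, i ∉ V → (x - y) i = 0 := by
    intro i hi; simp [Pi.sub_apply, hxO i hi, hyO i hi]
  have hbd : ∀ i, -kp ≤ (x - y) i ∧ (x - y) i ≤ kp := by
    intro i
    simp only [Pi.sub_apply]
    by_cases hi : i ∈ V
    · have h1 := hxV i hi; have h2 := hyV i hi; omega
    · rw [hxO i hi, hyO i hi]; omega
  rcases struct hT hkp0 hV hdΛ hd0 hoff hbd with hpos | hneg
  · refine ⟨x - y, hdΛ, ?_, hoff⟩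
    intro i hi
    have h1 := hxV i hi; have h2 := hyV i hi; have h3 := hpos i hi
    simp only [Pi.sub_apply] at h3 ⊢
    omega
  · have hymx : y - x ∈ Λ := by rw [← neg_sub x y]; exact neg_mem hdΛ
    refine ⟨y - x, hymx, ?_, ?_⟩
    · intro i hi
      have h1 := hxV i hi; have h2 := hyV i hi; have h3 := hneg i hi
      simp only [Pi.sub_apply] at h3 ⊢
      omega
    · intro i hi; simp [Pi.sub_apply, hxO i hi, hyO i hi]

lemma exists_mu (hT : Tiles (errBall n t kp 0) (Λ : Set (Fin n → ℤ)))
    (ht1 : 1 ≤ t) (htn : t < n) (hkp0 : 0 ≤ kp)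
    (hKN : n.choose t ≤ (kp+1).toNat)
    (rep : (Fin n → ℤ) → (Fin n → ℤ)) (hrepB : ∀ z, rep z ∈ errBall n t kp 0)
    (hrepΛ : ∀ z, z - rep z ∈ Λ)
    {V : Finset (Fin n)} (hV : V.card = t + 1) :
    ∃ w : Fin n → ℤ, isL Λ kp V w ∧ ∀ i, w i ≤ (n.choose t : ℤ) - 1 := by
  classical
  set K' := (kp+1).toNat with hK'
  have hVne : V.Nonempty := card_pos.mp (by omega)
  obtain ⟨c₀, hc₀⟩ := hVne
  set Svals : Set ℕ := {v : ℕ | ∃ w : Fin n → ℤ, isL Λ kp V w ∧ v = (w c₀).toNat} with hSvals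
  have hSne : Svals.Nonempty := by
    obtain ⟨w, hw⟩ := exists_isL hT ht1 htn hkp0 hKN rep hrepB hrepΛ hV
    exact ⟨(w c₀).toNat, w, hw, rfl⟩
  obtain ⟨μ, hμP, hμv⟩ := Nat.sInf_mem hSne
  have hmin : ∀ w : Fin n → ℤ, isL Λ kp V w → μ c₀ ≤ w c₀ := by
    intro w hw
    have h1 : sInf Svals ≤ (w c₀).toNat := Nat.sInf_le ⟨w, hw, rfl⟩
    rw [hμv] at h1
    have h2 := (hμP.2.1 c₀ hc₀).1
    have h3 := (hw.2.1 c₀ hc₀).1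
    omega
  have hmult : ∀ m : ℕ, ∀ w : Fin n → ℤ, isL Λ kp V w → (w c₀).toNat = m →
      ∃ j : ℤ, 1 ≤ j ∧ w = fun i => j * μ i := by
    intro m
    induction m using Nat.strong_induction_on with
    | _ m IH =>
      intro w hw hm
      by_cases hwμ : w = μ
      · exact ⟨1, le_refl 1, by rw [hwμ]; funext i; ring⟩
      · have hdΛ : w - μ ∈ Λ := sub_mem hw.1 hμP.1
        have hd0 : w - μ ≠ 0 := sub_ne_zero.mpr hwμ
        have hoff : ∀ i, i ∉ V → (w - μ) i = 0 := by
          intro i hi; simp [Pi.sub_apply, hw.2.2 i hi, hμP.2.2 i hi]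
        have hbd : ∀ i, -kp ≤ (w - μ) i ∧ (w - μ) i ≤ kp := by
          intro i
          simp only [Pi.sub_apply]
          by_cases hi : i ∈ V
          · have h1 := hw.2.1 i hi; have h2 := hμP.2.1 i hi; omega
          · rw [hw.2.2 i hi, hμP.2.2 i hi]; omega
        rcases struct hT hkp0 hV hdΛ hd0 hoff hbd with hpos | hneg
        · have hdP : isL Λ kp V (w - μ) := by
            refine ⟨hdΛ, ?_, hoff⟩
            intro i hi
            have h1 := hw.2.1 i hi; have h2 := hμP.2.1 i hi; have h3 := hpos i hi
            simp only [Pi.sub_apply] at h3 ⊢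
            omega
          have hlt : ((w - μ) c₀).toNat < m := by
            have h1 := (hμP.2.1 c₀ hc₀).1
            have h2 := (hw.2.1 c₀ hc₀).1
            have h3 := hpos c₀ hc₀
            simp only [Pi.sub_apply] at h3 ⊢
            omega
          obtain ⟨j, hj1, hjeq⟩ := IH _ hlt (w - μ) hdP rfl
          refine ⟨j + 1, by omega, ?_⟩
          funext i
          have h := congrFun hjeq i
          simp only [Pi.sub_apply] at h
          have : w i = j * μ i + μ i := by linarith
          rw [this]; ring
        · exfalso
          have h := hneg c₀ hc₀
          simp only [Pi.sub_apply] at h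
          have := hmin w hw
          omega
  have hVne' : V.Nonempty := ⟨c₀, hc₀⟩
  obtain ⟨c', hc'V, hmax⟩ := Finset.exists_max_image V μ hVne'
  have hm0 := hμP.2.1 c' hc'V
  set box2 := Fintype.piFinset fun i => if i = c' then Icc (0:ℤ) (μ c' - 1)
      else if i ∈ V then Icc (0:ℤ) kp else ({0} : Finset ℤ) with hbox2
  have hbox2card : box2.card = (μ c').toNat * K' ^ t := by
    rw [hbox2, Fintype.card_piFinset]
    rw [← Finset.mul_prod_erase univ _ (mem_univ c')]
    congr 1
    · simp [Int.card_Icc]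
    · calc (∏ i ∈ univ.erase c',
            ((if i = c' then Icc (0:ℤ) (μ c' - 1) else if i ∈ V then Icc (0:ℤ) kp
              else ({0} : Finset ℤ))).card)
          = ∏ i ∈ univ.erase c', (if i ∈ V then K' else 1) := by
            apply prod_congr rfl
            intro i hi
            have hne : i ≠ c' := (mem_erase.mp hi).1
            rw [if_neg hne]
            by_cases h : i ∈ V <;> simp [h, Int.card_Icc, hK']
        _ = K' ^ ((univ.erase c') ∩ V).card := by rw [Finset.prod_ite_mem, prod_const]
        _ = K' ^ t := by
            have hInt : (univ.erase c') ∩ V = V.erase c' := by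
              rw [Finset.erase_inter, Finset.univ_inter]
            rw [hInt, card_erase_of_mem hc'V, hV]
            norm_num
  have hmem2 : ∀ z (_ : z ∈ box2), (∀ i ∈ V, 0 ≤ z i ∧ z i ≤ kp) ∧ (∀ i, i ∉ V → z i = 0)
      ∧ z c' ≤ μ c' - 1 := by
    intro z hz
    rw [hbox2, Fintype.mem_piFinset] at hz
    refine ⟨?_, ?_, ?_⟩
    · intro i hi
      have := hz i
      by_cases h : i = c'
      · rw [if_pos h, mem_Icc] at this
        subst h
        omega
      · rw [if_neg h, if_pos hi, mem_Icc] at this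
        exact this
    · intro i hi
      have := hz i
      have h : i ≠ c' := fun h => hi (h ▸ hc'V)
      rwa [if_neg h, if_neg hi, mem_singleton] at this
    · have := hz c'
      rw [if_pos rfl, mem_Icc] at this
      exact this.2
  have hinj2 : Set.InjOn rep (box2 : Set (Fin n → ℤ)) := by
    intro x hx y hy hfeq
    by_contra hxy
    obtain ⟨hxV, hxO, hxc⟩ := hmem2 x hx
    obtain ⟨hyV, hyO, hyc⟩ := hmem2 y hy
    have hdΛ : x - y ∈ Λ := by
      have h1 := hrepΛ x
      have h2 := hrepΛ y
      have heq : (x - rep x) - (y - rep y) = x - y := by rw [hfeq]; ring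
      rw [← heq]
      exact sub_mem h1 h2
    have hd0 : x - y ≠ 0 := sub_ne_zero.mpr hxy
    have hoff : ∀ i, i ∉ V → (x - y) i = 0 := by
      intro i hi; simp [Pi.sub_apply, hxO i hi, hyO i hi]
    have hbd : ∀ i, -kp ≤ (x - y) i ∧ (x - y) i ≤ kp := by
      intro i
      simp only [Pi.sub_apply]
      by_cases hi : i ∈ V
      · have h1 := hxV i hi; have h2 := hyV i hi; omega
      · rw [hxO i hi, hyO i hi]; omega
    rcases struct hT hkp0 hV hdΛ hd0 hoff hbd with hpos | hneg
    · have hdP : isL Λ kp V (x - y) := by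
        refine ⟨hdΛ, ?_, hoff⟩
        intro i hi
        have h1 := hxV i hi; have h2 := hyV i hi; have h3 := hpos i hi
        simp only [Pi.sub_apply] at h3 ⊢
        omega
      obtain ⟨j, hj1, hjeq⟩ := hmult _ (x - y) hdP rfl
      have h := congrFun hjeq c'
      simp only [Pi.sub_apply] at h
      have hy0 := (hyV c' hc'V).1
      have h2 : 1 ≤ μ c' := hm0.1
      nlinarith [hxc, hy0, hj1, h2]
    · have hymx : y - x ∈ Λ := by rw [← neg_sub x y]; exact neg_mem hdΛ
      have hdP : isL Λ kp V (y - x) := by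
        refine ⟨hymx, ?_, ?_⟩
        · intro i hi
          have h1 := hxV i hi; have h2 := hyV i hi; have h3 := hneg i hi
          simp only [Pi.sub_apply] at h3 ⊢
          omega
        · intro i hi; simp [Pi.sub_apply, hxO i hi, hyO i hi]
      obtain ⟨j, hj1, hjeq⟩ := hmult _ (y - x) hdP rfl
      have h := congrFun hjeq c'
      simp only [Pi.sub_apply] at h
      have hx0 := (hxV c' hc'V).1
      have h2 : 1 ≤ μ c' := hm0.1
      nlinarith [hyc, hx0, hj1, h2]
  have hle2 : box2.card ≤ (BF n t kp).card :=
    card_le_card_of_injOn rep (fun z _ => mem_BF (hrepB z)) hinj2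
  have hltN : (μ c').toNat < n.choose t := by
    have h1 : (μ c').toNat * K' ^ t < n.choose t * K' ^ t := by
      calc (μ c').toNat * K' ^ t = box2.card := hbox2card.symm
        _ ≤ (BF n t kp).card := hle2
        _ < n.choose t * K' ^ t := BF_card_lt ht1 htn hkp0
    exact Nat.lt_of_mul_lt_mul_right h1
  refine ⟨μ, hμP, ?_⟩
  intro i
  have hNc : 1 ≤ μ c' := hm0.1
  have hc'bd : μ c' ≤ (n.choose t : ℤ) - 1 := by omega
  by_cases hi : i ∈ V
  · have := hmax i hi
    omega
  · rw [hμP.2.2 i hi]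
    omega

end Stmt11

open Stmt11

theorem stmt_11 (n t : ℕ) (kp : ℤ) (ht : 2 ≤ t) (htn : 4 * t < n)
    (hkp : 2 * (n.choose t : ℤ) - 2 ≤ kp) :
    ¬ ∃ Λ : AddSubgroup (Fin n → ℤ),
      Tiles (errBall n t kp 0) (Λ : Set (Fin n → ℤ)) := by
  rintro ⟨Λ, hT⟩
  classical
  set N := n.choose t with hN
  have htn' : t < n := by omega
  have ht1 : 1 ≤ t := by omega
  have hn0 : 0 < n := by omega
  have hNn : n ≤ N := by
    have hchain : ∀ j : ℕ, 1 ≤ j → j ≤ t → n.choose 1 ≤ n.choose j := by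
      intro j
      induction j with
      | zero => intro h1 _; omega
      | succ j IH =>
        intro _ hj
        by_cases hj1 : 1 ≤ j
        · have hIH := IH hj1 (by omega)
          have hstep : n.choose j ≤ n.choose (j+1) :=
            Nat.choose_le_succ_of_lt_half_left (by omega)
          omega
        · have hj0 : j = 0 := by omega
          subst hj0
          exact le_rfl
    calc n = n.choose 1 := (Nat.choose_one_right n).symm
      _ ≤ n.choose t := hchain t ht1 le_rfl
  have hN1 : 1 ≤ N := by omega
  have hNZ : (1:ℤ) ≤ (N:ℤ) := by exact_mod_cast hN1
  have hkp0 : 0 ≤ kp := by omega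
  have hKN : N ≤ (kp+1).toNat := by omega
  -- representative function from covering
  have hrepex : ∀ z : Fin n → ℤ, ∃ p : (Fin n → ℤ) × (Fin n → ℤ),
      p.1 ∈ (Λ : Set (Fin n → ℤ)) ∧ p.2 ∈ errBall n t kp 0 ∧ z = p.1 + p.2 :=
    fun z => (hT z).exists
  choose pf hp1 hp2 hp3 using hrepex
  set rep : (Fin n → ℤ) → (Fin n → ℤ) := fun z => (pf z).2 with hrepdef
  have hrepB : ∀ z, rep z ∈ errBall n t kp 0 := hp2
  have hrepΛ : ∀ z, z - rep z ∈ Λ := by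
    intro z
    have h3 := hp3 z
    have he : z - rep z = (pf z).1 := sub_eq_of_eq_add h3
    rw [he]
    exact hp1 z
  -- a fixed coordinate
  set c : Fin n := ⟨0, hn0⟩ with hc
  set 𝒯 : Finset (Finset (Fin n)) := (univ.erase c).powersetCard t with h𝒯
  have hTV : ∀ T ∈ 𝒯, (insert c T).card = t + 1 ∧ c ∉ T := by
    intro T hTm
    obtain ⟨hsub, hcard⟩ := mem_powersetCard.mp hTm
    have hcT : c ∉ T := fun h => (mem_erase.mp (hsub h)).1 rfl
    exact ⟨by rw [card_insert_of_notMem hcT, hcard], hcT⟩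
  -- chosen minimal vectors
  have hμex : ∀ T : Finset (Fin n), ∃ w : Fin n → ℤ,
      T ∈ 𝒯 → (isL Λ kp (insert c T) w ∧ ∀ i, w i ≤ (N : ℤ) - 1) := by
    intro T
    by_cases hTm : T ∈ 𝒯
    · obtain ⟨w, hw⟩ := exists_mu hT ht1 htn' hkp0 hKN rep hrepB hrepΛ (hTV T hTm).1
      exact ⟨w, fun _ => hw⟩
    · exact ⟨0, fun h => absurd h hTm⟩
  choose μf hμf using hμex
  -- coordinate-value injectivity
  have cinj : ∀ (V W : Finset (Fin n)) (w w' : Fin n → ℤ), V.card = t+1 → W.card = t+1 →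
      c ∈ V → c ∈ W → isL Λ kp V w → isL Λ kp W w' → w c = w' c → w = w' := by
    intro V W w w' hVc hWc hcV hcW hw hw' heq
    by_contra hne
    have hdΛ : w - w' ∈ Λ := sub_mem hw.1 hw'.1
    have hd0 : w - w' ≠ 0 := sub_ne_zero.mpr hne
    have hwpos : ∀ i, 0 ≤ w i ∧ w i ≤ kp := by
      intro i
      by_cases hi : i ∈ V
      · have := hw.2.1 i hi; omega
      · rw [hw.2.2 i hi]; omega
    have hwpos' : ∀ i, 0 ≤ w' i ∧ w' i ≤ kp := by
      intro i
      by_cases hi : i ∈ W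
      · have := hw'.2.1 i hi; omega
      · rw [hw'.2.2 i hi]; omega
    apply hd0
    apply pack hT _ hdΛ
    · apply max_mem_ball hkp0
      · intro i
        show w i - w' i ≤ kp
        have := hwpos i; have := hwpos' i; omega
      · have hsub : (univ.filter fun i => 1 ≤ (w - w') i) ⊆ V.erase c := by
          intro i hi
          simp only [mem_filter, mem_univ, true_and, Pi.sub_apply] at hi
          rw [mem_erase]
          constructor
          · rintro rfl
            omega
          · by_contra hiV
            have := hw.2.2 i hiV
            have := hwpos' i
            omega
        calc (univ.filter fun i => 1 ≤ (w - w') i).card ≤ (V.erase c).card :=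
              card_le_card hsub
          _ = t := by rw [card_erase_of_mem hcV, hVc]; omega
    · apply max_mem_ball hkp0
      · intro i
        show -((w - w') i) ≤ kp
        simp only [Pi.sub_apply]
        have := hwpos i; have := hwpos' i; omega
      · have hsub : (univ.filter fun i => 1 ≤ -((w - w') i)) ⊆ W.erase c := by
          intro i hi
          simp only [mem_filter, mem_univ, true_and, Pi.sub_apply] at hi
          rw [mem_erase]
          constructor
          · rintro rfl
            omega
          · by_contra hiW
            have := hw'.2.2 i hiW
            have := hwpos i
            omega
        calc (univ.filter fun i => 1 ≤ -((w - w') i)).card ≤ (W.erase c).card :=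
              card_le_card hsub
          _ = t := by rw [card_erase_of_mem hcW, hWc]; omega
  -- basic values
  have hval : ∀ T ∈ 𝒯, 1 ≤ (μf T) c ∧ (μf T) c ≤ (N:ℤ) - 1 := by
    intro T hTm
    obtain ⟨hisL, hbd⟩ := hμf T hTm
    exact ⟨(hisL.2.1 c (mem_insert_self _ _)).1, hbd c⟩
  have hsupp : ∀ T ∈ 𝒯, ∀ i : Fin n, i ∈ T ↔ ((μf T) i ≠ 0 ∧ i ≠ c) := by
    intro T hTm i
    obtain ⟨hisL, -⟩ := hμf T hTm
    constructor
    · intro hi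
      have h1 := hisL.2.1 i (mem_insert_of_mem hi)
      exact ⟨by omega, fun h => (hTV T hTm).2 (h ▸ hi)⟩
    · rintro ⟨h1, h2⟩
      by_contra hiT
      have : i ∉ insert c T := by
        rw [mem_insert]
        push_neg
        exact ⟨h2, hiT⟩
      exact h1 (hisL.2.2 i this)
  -- the value set A
  set A : Finset ℕ := 𝒯.image (fun T => ((μf T) c).toNat) with hA
  have hinjT : Set.InjOn (fun T => ((μf T) c).toNat) (𝒯 : Set (Finset (Fin n))) := by
    intro T hTm T' hTm' heq
    simp only at heq
    rw [Finset.mem_coe] at hTm hTm'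
    have h1 := hval T hTm
    have h2 := hval T' hTm'
    have heqz : (μf T) c = (μf T') c := by omega
    have hvec := cinj (insert c T) (insert c T') (μf T) (μf T')
      (hTV T hTm).1 (hTV T' hTm').1 (mem_insert_self _ _) (mem_insert_self _ _)
      (hμf T hTm).1 (hμf T' hTm').1 heqz
    ext i
    rw [hsupp T hTm i, hsupp T' hTm' i, hvec]
  have hcardA : A.card = (n-1).choose t := by
    rw [hA, Finset.card_image_of_injOn hinjT, h𝒯, card_powersetCard,
      card_erase_of_mem (mem_univ c), card_univ, Fintype.card_fin]
  have hAsub : A ⊆ Icc 1 (N - 1) := by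
    intro a ha
    obtain ⟨T, hTm, rfl⟩ := mem_image.mp ha
    have h := hval T hTm
    rw [mem_Icc]
    omega
  -- doubling-free
  have hdbl : ∀ a ∈ A, 2 * a ∉ A := by
    intro a haA hda
    obtain ⟨T, hTm, hTe⟩ := mem_image.mp haA
    obtain ⟨T', hTm', hTe'⟩ := mem_image.mp hda
    set w2 : Fin n → ℤ := fun i => 2 * (μf T) i with hw2def
    have hw2 : isL Λ kp (insert c T) w2 := by
      obtain ⟨⟨hmem, hbV, hbO⟩, hbd⟩ := hμf T hTm
      refine ⟨?_, ?_, ?_⟩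
      · have hsum : w2 = (μf T) + (μf T) := by funext i; show 2 * (μf T) i = (μf T) i + (μf T) i; ring
        rw [hsum]
        exact add_mem hmem hmem
      · intro i hi
        have h1 := hbV i hi
        have h2 := hbd i
        constructor
        · show (1:ℤ) ≤ 2 * (μf T) i; omega
        · show 2 * (μf T) i ≤ kp; omega
      · intro i hi
        show 2 * (μf T) i = 0
        rw [hbO i hi]; ring
    have h1 := hval T hTm
    have h2 := hval T' hTm'
    have heqc : (μf T') c = w2 c := by
      show _ = 2 * (μf T) c
      omega
    have hvec := cinj (insert c T') (insert c T) (μf T') w2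
      (hTV T' hTm').1 (hTV T hTm).1 (mem_insert_self _ _) (mem_insert_self _ _)
      (hμf T' hTm').1 hw2 heqc
    have hTT : T' = T := by
      ext i
      rw [hsupp T hTm i, hsupp T' hTm' i, hvec]
      have : w2 i ≠ 0 ↔ (μf T) i ≠ 0 := by
        constructor
        · intro h hq; exact h (by show 2 * (μf T) i = 0; rw [hq]; ring)
        · intro h hq; apply h; have : 2 * (μf T) i = 0 := hq; omega
      rw [this]
    rw [hTT] at hTe'
    omega
  -- the counting contradiction
  set X := N - 1 with hX
  set low := A.filter (fun a => 2 * a ≤ X) with hlow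
  have h1 : A.card + low.card ≤ X := by
    have hdisj : Disjoint A (low.image (fun a => 2 * a)) := by
      rw [Finset.disjoint_right]
      intro b hb hbA
      obtain ⟨a, ha, rfl⟩ := mem_image.mp hb
      exact hdbl a (mem_of_mem_filter a ha) hbA
    have hsub2 : A ∪ low.image (fun a => 2 * a) ⊆ Icc 1 X := by
      intro b hb
      rcases mem_union.mp hb with hb | hb
      · exact hAsub hb
      · obtain ⟨a, ha, rfl⟩ := mem_image.mp hb
        obtain ⟨haA, hax⟩ := mem_filter.mp ha
        have := hAsub haA
        rw [mem_Icc] at this ⊢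
        omega
    have hcu := card_le_card hsub2
    have himg : (low.image (fun a => 2 * a)).card = low.card :=
      card_image_of_injective _ (mul_right_injective₀ (by norm_num : (2:ℕ) ≠ 0))
    have hIcc : (Icc 1 X).card = X := by rw [Nat.card_Icc]; omega
    rw [card_union_of_disjoint hdisj, himg, hIcc] at hcu
    exact hcu
  have h2 : A.card ≤ low.card + (X - X / 2) := by
    have hun : low ∪ A.filter (fun a => ¬ (2 * a ≤ X)) = A := by
      ext a
      simp only [hlow, mem_union, mem_filter]
      tauto
    have hsplit : A.card ≤ low.card + (A.filter (fun a => ¬ (2 * a ≤ X))).card := by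
      calc A.card = (low ∪ A.filter (fun a => ¬ (2 * a ≤ X))).card := by rw [hun]
        _ ≤ _ := card_union_le _ _
    have hsub3 : A.filter (fun a => ¬ (2 * a ≤ X)) ⊆ Icc (X/2 + 1) X := by
      intro a ha
      obtain ⟨haA, hne⟩ := mem_filter.mp ha
      have := hAsub haA
      rw [mem_Icc] at this ⊢
      omega
    have hc3 := card_le_card hsub3
    rw [Nat.card_Icc] at hc3
    omega
  set H := (n-1).choose t with hH
  have hid : N * n = N * (n - t) + N * t := by
    rw [← Nat.mul_add]
    congr 1
    omega
  have hidH : n * H = (n - t) * N := by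
    have he1 := Nat.add_one_mul_choose_eq (n-1) t
    have hn1 : n - 1 + 1 = n := by omega
    rw [hn1] at he1
    have he2 := Nat.choose_succ_right_eq n t
    calc n * H = n.choose (t+1) * (t+1) := he1
      _ = n.choose t * (n - t) := he2
      _ = (n - t) * N := by rw [hN]; ring
  have hkey : 3 * N + 1 ≤ 4 * H := by
    have hmul : (3 * N + 1) * n ≤ (4 * H) * n := by
      have e1 : (4 * H) * n = 4 * ((n - t) * N) := by
        calc (4 * H) * n = 4 * (n * H) := by ring
          _ = 4 * ((n - t) * N) := by rw [hidH]
      have hD1 : 3 * t + 1 ≤ n - t := by omega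
      have hP1 : N * (3 * t + 1) ≤ N * (n - t) := Nat.mul_le_mul_left N hD1
      have e2 : (3 * N + 1) * n = 3 * (N * n) + n := by ring
      have e3 : N * (3 * t + 1) = 3 * (N * t) + N := by ring
      rw [e1, e2, hid]
      have : (n - t) * N = N * (n - t) := by ring
      rw [this]
      omega
    exact Nat.le_of_mul_le_mul_right hmul hn0
  have hfin : 4 * A.card ≤ 3 * X + 1 := by omega
  rw [hcardA] at hfin
  omega
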